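/- (Variance of the mini-batch SPIDER gradient-difference estimator) Let f_1,…,f_N : ℝ^d → ℝ be differentiable with L-Lipschitz gradients, and let f = (1/N)∑_{i=1}^N f_i. Fix x, y ∈ ℝ^d. Let i_1,…,i_S be independent indices, each uniformly distributed on {1,…,N}, and set Δ = (1/S)∑_{j=1}^S (∇f_{i_j}(x) − ∇f_{i_j}(y)). Then E[Δ] = ∇f(x) − ∇f(y) and E[‖Δ − (∇f(x) − ∇f(y))‖²] ≤ L²·‖x − y‖²/S. -/

import Mathlib

open MeasureTheory ProbabilityTheory
open scoped ProbabilityTheory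

section aux
variable {E : Type*} [NormedAddCommGroup E] [InnerProductSpace ℝ E]

lemma aux_sum_pi (N : ℕ) (S : ℕ) (g : Fin N → E) :
    ∑ v : Fin S → Fin N, ∑ j, g (v j) = (S * N ^ (S - 1)) • ∑ k, g k := by
  induction S with
  | zero => simp
  | succ S ih =>
    rw [← ((Fin.consEquiv (fun _ : Fin (S+1) => Fin N)).sum_comp
      (fun v => ∑ j, g (v j))), Fintype.sum_prod_type]
    simp only [Fin.consEquiv_apply, Fin.sum_univ_succ, Fin.cons_zero, Fin.cons_succ]
    have card : Fintype.card (Fin S → Fin N) = N ^ S := by simp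
    calc ∑ a : Fin N, ∑ w : Fin S → Fin N, (g a + ∑ j, g (w j))
        = ∑ a : Fin N, ((N ^ S) • g a + (S * N ^ (S - 1)) • ∑ k, g k) := by
          refine Finset.sum_congr rfl fun a _ => ?_
          rw [Finset.sum_add_distrib, Finset.sum_const, ih, Finset.card_univ, card]
      _ = (N ^ S) • ∑ k, g k + (N * (S * N ^ (S - 1))) • ∑ k, g k := by
          rw [Finset.sum_add_distrib, ← Finset.smul_sum, Finset.sum_const,
            Finset.card_univ, Fintype.card_fin, smul_smul]
      _ = ((S + 1) * N ^ (S + 1 - 1)) • ∑ k, g k := by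
          rw [← add_smul]
          congr 1
          rcases Nat.eq_zero_or_pos S with h | h
          · subst h; simp
          · have hp : N * N ^ (S - 1) = N ^ S := by
              rw [← pow_succ']
              congr 1
              omega
            simp only [Nat.add_sub_cancel]
            rw [show N * (S * N ^ (S - 1)) = S * (N * N ^ (S - 1)) by ring, hp]
            ring

end aux

section aux2
open scoped RealInnerProductSpace
variable {E : Type*} [NormedAddCommGroup E] [InnerProductSpace ℝ E]

lemma aux_sum_sq (N : ℕ) (S : ℕ) (h : Fin N → E) (hsum : ∑ k, h k = 0) :
    ∑ v : Fin S → Fin N, ‖∑ j, h (v j)‖ ^ 2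
      = (S * N ^ (S - 1) : ℕ) * ∑ k, ‖h k‖ ^ 2 := by
  induction S with
  | zero => simp
  | succ S ih =>
    rw [← ((Fin.consEquiv (fun _ : Fin (S+1) => Fin N)).sum_comp
      (fun v => ‖∑ j, h (v j)‖ ^ 2)), Fintype.sum_prod_type]
    simp only [Fin.consEquiv_apply, Fin.sum_univ_succ, Fin.cons_zero, Fin.cons_succ]
    have card : Fintype.card (Fin S → Fin N) = N ^ S := by simp
    have expand : ∀ (a : Fin N) (w : Fin S → Fin N),
        ‖h a + ∑ j, h (w j)‖ ^ 2
          = ‖h a‖ ^ 2 + 2 * ⟪h a, ∑ j, h (w j)⟫ + ‖∑ j, h (w j)‖ ^ 2 :=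
      fun a w => norm_add_sq_real _ _
    calc ∑ a : Fin N, ∑ w : Fin S → Fin N, ‖h a + ∑ j, h (w j)‖ ^ 2
        = ∑ a : Fin N, ((N ^ S : ℕ) * ‖h a‖ ^ 2
            + 2 * ⟪h a, ∑ w : Fin S → Fin N, ∑ j, h (w j)⟫
            + (S * N ^ (S - 1) : ℕ) * ∑ k, ‖h k‖ ^ 2) := by
          refine Finset.sum_congr rfl fun a _ => ?_
          simp only [expand]
          rw [Finset.sum_add_distrib, Finset.sum_add_distrib, ih, Finset.sum_const,
            Finset.card_univ, card, inner_sum, ← Finset.mul_sum, nsmul_eq_mul]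
      _ = (N ^ S : ℕ) * ∑ k, ‖h k‖ ^ 2
            + 2 * ⟪∑ a, h a, ∑ w : Fin S → Fin N, ∑ j, h (w j)⟫
            + (N : ℕ) * ((S * N ^ (S - 1) : ℕ) * ∑ k, ‖h k‖ ^ 2) := by
          rw [Finset.sum_add_distrib, Finset.sum_add_distrib, ← Finset.mul_sum,
            Finset.sum_const, Finset.card_univ, Fintype.card_fin, nsmul_eq_mul,
            sum_inner, ← Finset.mul_sum]
      _ = ((S + 1) * N ^ (S + 1 - 1) : ℕ) * ∑ k, ‖h k‖ ^ 2 := by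
          rw [hsum, inner_zero_left]
          have hp : (N : ℝ) * (N : ℝ) ^ (S - 1) = (N : ℝ) ^ S ∨ S = 0 := by
            rcases Nat.eq_zero_or_pos S with hz | hpos
            · exact Or.inr hz
            · left
              rw [← pow_succ']
              congr 1
              omega
          rcases hp with hp | hz
          · push_cast
            rw [show (N:ℝ) * ((S:ℝ) * (N:ℝ) ^ (S-1) * ∑ k, ‖h k‖ ^ 2)
                = (S:ℝ) * ((N:ℝ) * (N:ℝ)^(S-1)) * ∑ k, ‖h k‖ ^ 2 by ring, hp]
            ring
          · subst hz
            push_cast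
            ring

end aux2

section aux3
open scoped RealInnerProductSpace
variable {E : Type*} [NormedAddCommGroup E] [InnerProductSpace ℝ E]

lemma aux_var_le (N : ℕ) (g : Fin N → E) (μ : E) (hμ : ∑ k, g k = (N : ℕ) • μ) :
    ∑ k, ‖g k - μ‖ ^ 2 ≤ ∑ k, ‖g k‖ ^ 2 := by
  have h1 : ∑ k, ‖g k - μ‖ ^ 2
      = ∑ k, ‖g k‖ ^ 2 - 2 * ⟪∑ k, g k, μ⟫ + (N : ℝ) * ‖μ‖ ^ 2 := by
    simp only [norm_sub_sq_real]
    rw [Finset.sum_add_distrib, Finset.sum_sub_distrib, sum_inner, ← Finset.mul_sum,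
      Finset.sum_const, Finset.card_univ, Fintype.card_fin, nsmul_eq_mul]
  have h2 : ⟪∑ k, g k, μ⟫ = (N : ℝ) * ‖μ‖ ^ 2 := by
    rw [hμ, ← Nat.cast_smul_eq_nsmul ℝ, real_inner_smul_left, real_inner_self_eq_norm_sq]
  have h3 : 0 ≤ (N : ℝ) * ‖μ‖ ^ 2 := by positivity
  rw [h1, h2]
  linarith

variable [CompleteSpace E]

lemma aux_grad_avg (N : ℕ) (fi : Fin N → E → ℝ) (hdiff : ∀ i, Differentiable ℝ (fi i))
    (z : E) :
    gradient (fun z => (N : ℝ)⁻¹ * ∑ i, fi i z) z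
      = (N : ℝ)⁻¹ • ∑ i, gradient (fi i) z := by
  have hs : HasFDerivAt (fun z => ∑ i, fi i z)
      (∑ i, (InnerProductSpace.toDual ℝ E) (gradient (fi i) z)) z :=
    HasFDerivAt.fun_sum fun i _ => ((hdiff i z).hasGradientAt).hasFDerivAt
  have hc := hs.const_mul ((N : ℝ)⁻¹)
  have := hc.hasGradientAt.gradient
  rw [this]
  simp only [_root_.map_smul, map_sum, LinearIsometryEquiv.symm_apply_apply]

end aux3

section aux4

lemma aux_integral {Ω : Type*} [MeasureSpace Ω] [IsProbabilityMeasure (ℙ : Measure Ω)]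
    (N S : ℕ) (idx : Fin S → Ω → Fin N)
    (hidxmeas : ∀ j, Measurable (idx j))
    (hidxunif : ∀ j, ∀ k : Fin N, ℙ {ω | idx j ω = k} = (N : ENNReal)⁻¹)
    (hidxindep : iIndepFun idx ℙ)
    {G : Type*} [NormedAddCommGroup G] [NormedSpace ℝ G] [CompleteSpace G]
    (φ : (Fin S → Fin N) → G) :
    ∫ ω, φ (fun j => idx j ω) = ∑ v : Fin S → Fin N, ((N : ℝ) ^ S)⁻¹ • φ v := by
  have hT : Measurable (fun ω => (fun j => idx j ω)) :=
    measurable_pi_lambda _ hidxmeas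
  have hmap : ∀ v : Fin S → Fin N,
      Measure.map (fun ω => (fun j => idx j ω)) ℙ {v} = ((N : ENNReal)⁻¹) ^ S := by
    intro v
    rw [Measure.map_apply hT (measurableSet_singleton v)]
    have hpre : (fun ω => (fun j => idx j ω)) ⁻¹' {v} = ⋂ j, idx j ⁻¹' {v j} := by
      ext ω
      simp [funext_iff]
    rw [hpre, hidxindep.meas_iInter (fun j => ⟨{v j}, measurableSet_singleton _, rfl⟩)]
    have : ∀ j, ℙ (idx j ⁻¹' {v j}) = (N : ENNReal)⁻¹ := by
      intro j
      exact hidxunif j (v j)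
    simp [this, Finset.prod_const]
  rw [← integral_map hT.aemeasurable (StronglyMeasurable.of_discrete).aestronglyMeasurable,
    integral_fintype Integrable.of_finite]
  refine Finset.sum_congr rfl fun v _ => ?_
  rw [measureReal_def, hmap v]
  congr 1
  rw [ENNReal.toReal_pow, ENNReal.toReal_inv, ← inv_pow]
  simp

end aux4


/-- variance of the mini-batch SPIDER gradient-difference estimator.
Let `fi 1, …, fi N : ℝ^d → ℝ` be differentiable with `L`-Lipschitz gradients and
`f = (1/N)∑ fi i`. Fix `x, y`. Let `idx 1, …, idx S` be independent uniform indices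
on `Fin N` and `Δ ω = (1/S)∑ⱼ (∇fi (idx j ω) x - ∇fi (idx j ω) y)`. Then
`E[Δ] = ∇f x - ∇f y` and `E[‖Δ - (∇f x - ∇f y)‖²] ≤ L²‖x - y‖²/S`. -/
theorem stmt12 {Ω : Type*} [MeasureSpace Ω] [IsProbabilityMeasure (ℙ : Measure Ω)]
    {dd : ℕ} (N S : ℕ) (hN : 0 < N) (hS : 0 < S) (L : ℝ)
    (fi : Fin N → EuclideanSpace ℝ (Fin dd) → ℝ)
    (hdiff : ∀ i, Differentiable ℝ (fi i))
    (hlip : ∀ i, ∀ x y, ‖gradient (fi i) x - gradient (fi i) y‖ ≤ L * ‖x - y‖)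
    (f : EuclideanSpace ℝ (Fin dd) → ℝ)
    (hf : f = fun z => (N : ℝ)⁻¹ * ∑ i, fi i z)
    (x y : EuclideanSpace ℝ (Fin dd))
    (idx : Fin S → Ω → Fin N)
    (hidxmeas : ∀ j, Measurable (idx j))
    (hidxunif : ∀ j, ∀ k : Fin N, ℙ {ω | idx j ω = k} = (N : ENNReal)⁻¹)
    (hidxindep : iIndepFun idx ℙ)
    (Δ : Ω → EuclideanSpace ℝ (Fin dd))
    (hΔ : ∀ ω, Δ ω = (S : ℝ)⁻¹ •
      ∑ j, (gradient (fi (idx j ω)) x - gradient (fi (idx j ω)) y)) :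
    (∫ ω, Δ ω) = gradient f x - gradient f y ∧
      (∫ ω, ‖Δ ω - (gradient f x - gradient f y)‖ ^ 2)
        ≤ L ^ 2 * ‖x - y‖ ^ 2 / S := by
  have hNR : (0:ℝ) < N := by exact_mod_cast hN
  have hSR : (0:ℝ) < S := by exact_mod_cast hS
  set g : Fin N → EuclideanSpace ℝ (Fin dd) :=
    fun k => gradient (fi k) x - gradient (fi k) y with hgdef
  have hgradf : ∀ z, gradient f z = (N : ℝ)⁻¹ • ∑ i, gradient (fi i) z := by
    intro z
    rw [hf]
    exact aux_grad_avg N fi hdiff z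
  set μ := gradient f x - gradient f y with hμdef
  have hμ : μ = (N : ℝ)⁻¹ • ∑ k, g k := by
    rw [hμdef, hgradf x, hgradf y, ← smul_sub, ← Finset.sum_sub_distrib]
  have hNμ : ∑ k, g k = (N : ℕ) • μ := by
    rw [hμ, ← Nat.cast_smul_eq_nsmul ℝ, smul_smul, mul_inv_cancel₀ (ne_of_gt hNR), one_smul]
  have hpow : (N:ℝ) ^ S = (N:ℝ) * (N:ℝ) ^ (S - 1) := by
    rw [← pow_succ']
    congr 1
    omega
  -- Part 1
  have part1 : (∫ ω, Δ ω) = μ := by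
    have e1 : (∫ ω, Δ ω)
        = ∫ ω, (fun v : Fin S → Fin N => (S:ℝ)⁻¹ • ∑ j, g (v j)) (fun j => idx j ω) := by
      congr 1
      funext ω
      rw [hΔ]
    rw [e1, aux_integral N S idx hidxmeas hidxunif hidxindep
      (fun v : Fin S → Fin N => (S:ℝ)⁻¹ • ∑ j, g (v j))]
    have e2 : ∑ v : Fin S → Fin N, ((N:ℝ)^S)⁻¹ • ((S:ℝ)⁻¹ • ∑ j, g (v j))
        = (((N:ℝ)^S)⁻¹ * (S:ℝ)⁻¹) • ∑ v : Fin S → Fin N, ∑ j, g (v j) := by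
      rw [Finset.smul_sum]
      simp [smul_smul]
    rw [e2, aux_sum_pi, ← Nat.cast_smul_eq_nsmul ℝ, smul_smul, hμ]
    congr 1
    push_cast
    rw [hpow]
    field_simp
  refine ⟨part1, ?_⟩
  -- Part 2
  set h : Fin N → EuclideanSpace ℝ (Fin dd) := fun k => g k - μ with hhdef
  have hsum0 : ∑ k, h k = 0 := by
    simp only [hhdef]
    rw [Finset.sum_sub_distrib, hNμ, Finset.sum_const, Finset.card_univ,
      Fintype.card_fin, sub_self]
  have hpt : ∀ ω, ‖Δ ω - μ‖ ^ 2
      = (fun v : Fin S → Fin N => ‖(S:ℝ)⁻¹ • ∑ j, h (v j)‖ ^ 2) (fun j => idx j ω) := by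
    intro ω
    show ‖Δ ω - μ‖ ^ 2 = ‖(S:ℝ)⁻¹ • ∑ j, h (idx j ω)‖ ^ 2
    have e : (S:ℝ)⁻¹ • ∑ j : Fin S, h (idx j ω) = Δ ω - μ := by
      rw [hΔ]
      simp only [hhdef]
      rw [Finset.sum_sub_distrib, smul_sub, Finset.sum_const, Finset.card_univ,
        Fintype.card_fin, ← Nat.cast_smul_eq_nsmul ℝ, smul_smul,
        inv_mul_cancel₀ (ne_of_gt hSR), one_smul]
    rw [e]
  have part2int : (∫ ω, ‖Δ ω - μ‖ ^ 2)
      = ∑ v : Fin S → Fin N, ((N:ℝ)^S)⁻¹ • ‖(S:ℝ)⁻¹ • ∑ j, h (v j)‖ ^ 2 := by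
    calc (∫ ω, ‖Δ ω - μ‖ ^ 2)
        = ∫ ω, (fun v : Fin S → Fin N => ‖(S:ℝ)⁻¹ • ∑ j, h (v j)‖ ^ 2)
            (fun j => idx j ω) := by
          congr 1
          funext ω
          exact hpt ω
      _ = _ := aux_integral N S idx hidxmeas hidxunif hidxindep
            (fun v : Fin S → Fin N => ‖(S:ℝ)⁻¹ • ∑ j, h (v j)‖ ^ 2)
  have hψ : ∀ v : Fin S → Fin N, ‖(S:ℝ)⁻¹ • ∑ j, h (v j)‖ ^ 2
      = ((S:ℝ)⁻¹)^2 * ‖∑ j, h (v j)‖^2 := by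
    intro v
    rw [norm_smul, Real.norm_eq_abs, abs_of_nonneg (by positivity), mul_pow]
  have hval : (∫ ω, ‖Δ ω - μ‖ ^ 2)
      = ((N:ℝ)^S)⁻¹ * (((S:ℝ)⁻¹)^2 * (((S * N ^ (S-1) : ℕ) : ℝ) * ∑ k, ‖h k‖^2)) := by
    rw [part2int]
    simp only [smul_eq_mul, hψ]
    rw [← Finset.mul_sum, ← Finset.mul_sum, aux_sum_sq N S h hsum0]
  have hbd : ∑ k, ‖h k‖ ^ 2 ≤ (N:ℝ) * (L^2 * ‖x - y‖^2) := by
    have h1 := aux_var_le N g μ hNμ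
    have h2 : ∑ k, ‖g k‖^2 ≤ ∑ _k : Fin N, (L^2 * ‖x-y‖^2) := by
      apply Finset.sum_le_sum
      intro k _
      have hl := hlip k x y
      have h0 : ‖g k‖^2 ≤ (L * ‖x - y‖)^2 := pow_le_pow_left₀ (norm_nonneg _) hl 2
      calc ‖g k‖^2 ≤ (L*‖x-y‖)^2 := h0
        _ = L^2*‖x-y‖^2 := by ring
    rw [Finset.sum_const, Finset.card_univ, Fintype.card_fin, nsmul_eq_mul] at h2
    exact le_trans h1 h2
  rw [hval]
  have hSig : (0:ℝ) ≤ ∑ k, ‖h k‖ ^ 2 := by positivity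
  have hcoef : ∀ A : ℝ, ((N:ℝ)^S)⁻¹ * (((S:ℝ)⁻¹)^2 * (((S * N ^ (S-1) : ℕ) : ℝ) * A))
      = A / ((S:ℝ) * (N:ℝ)) := by
    intro A
    push_cast
    rw [hpow]
    field_simp
  rw [hcoef]
  calc (∑ k, ‖h k‖ ^ 2) / ((S:ℝ) * (N:ℝ))
      ≤ ((N:ℝ) * (L^2 * ‖x - y‖^2)) / ((S:ℝ) * (N:ℝ)) := by
        gcongr
      _ = L ^ 2 * ‖x - y‖ ^ 2 / S := by
        field_simp
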